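/- The meet operator ⊓ on the symbolic lattice L is idempotent, commutative, and associative: for all l, l₁, l₂, l₃ ∈ L, l ⊓ l = l, l₁ ⊓ l₂ = l₂ ⊓ l₁, and (l₁ ⊓ l₂) ⊓ l₃ = l₁ ⊓ (l₂ ⊓ l₃). -/

import Mathlib

inductive SymExpr (P U B F : Type*) where
  | bot : SymExpr P U B F
  | top : SymExpr P U B F
  | prim : P → SymExpr P U B F
  | unop : U → SymExpr P U B F → SymExpr P U B F
  | binop : B → SymExpr P U B F → SymExpr P U B F → SymExpr P U B F
  | fn : F → List (SymExpr P U B F) → SymExpr P U B F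
  | phi : List (SymExpr P U B F) → SymExpr P U B F

namespace SymExpr

variable {P U B F : Type*}

/-- The partial order `⊑` on the symbolic lattice. -/
inductive Le : SymExpr P U B F → SymExpr P U B F → Prop where
  | bot (l) : Le .bot l
  | top (l) : Le l .top
  | prim (p : P) : Le (.prim p) (.prim p)
  | unop {l l'} (u : U) : Le l l' → Le (.unop u l) (.unop u l')
  | binop {l₁ l₂ l₁' l₂'} (b : B) : Le l₁ l₁' → Le l₂ l₂' →
      Le (.binop b l₁ l₂) (.binop b l₁' l₂')
  | fn {ls ls'} (f : F) : List.Forall₂ Le ls ls' → Le (.fn f ls) (.fn f ls')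
  | phi {ls ls'} : List.Forall₂ Le ls ls' → Le (.phi ls) (.phi ls')

attribute [local instance] Classical.propDecidable

mutual
noncomputable def join : SymExpr P U B F → SymExpr P U B F → SymExpr P U B F
  | .bot, l => l
  | l, .bot => l
  | .prim p, .prim p' => if p = p' then .prim p else .top
  | .unop u l, .unop u' l' => if u = u' then .unop u (join l l') else .top
  | .binop b l₁ l₂, .binop b' l₁' l₂' =>
      if b = b' then .binop b (join l₁ l₁') (join l₂ l₂') else .top
  | .fn f ls, .fn f' ls' =>
      if f = f' ∧ ls.length = ls'.length then .fn f (joinList ls ls') else .top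
  | .phi ls, .phi ls' =>
      if ls.length = ls'.length then .phi (joinList ls ls') else .top
  | _, _ => .top

noncomputable def joinList : List (SymExpr P U B F) → List (SymExpr P U B F) → List (SymExpr P U B F)
  | l :: ls, l' :: ls' => join l l' :: joinList ls ls'
  | _, _ => []
end

mutual
noncomputable def meet : SymExpr P U B F → SymExpr P U B F → SymExpr P U B F
  | .top, l => l
  | l, .top => l
  | .prim p, .prim p' => if p = p' then .prim p else .bot
  | .unop u l, .unop u' l' => if u = u' then .unop u (meet l l') else .bot
  | .binop b l₁ l₂, .binop b' l₁' l₂' =>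
      if b = b' then .binop b (meet l₁ l₁') (meet l₂ l₂') else .bot
  | .fn f ls, .fn f' ls' =>
      if f = f' ∧ ls.length = ls'.length then .fn f (meetList ls ls') else .bot
  | .phi ls, .phi ls' =>
      if ls.length = ls'.length then .phi (meetList ls ls') else .bot
  | _, _ => .bot

noncomputable def meetList : List (SymExpr P U B F) → List (SymExpr P U B F) → List (SymExpr P U B F)
  | l :: ls, l' :: ls' => meet l l' :: meetList ls ls'
  | _, _ => []
end

mutual
def depth : SymExpr P U B F → ℕ
  | .bot => 0
  | .top => 0
  | .prim _ => 0
  | .unop _ l => 1 + depth l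
  | .binop _ l₁ l₂ => 1 + max (depth l₁) (depth l₂)
  | .fn _ ls => 1 + depthList ls
  | .phi ls => 1 + depthList ls

def depthList : List (SymExpr P U B F) → ℕ
  | [] => 0
  | l :: ls => max (depth l) (depthList ls)
end

/-- The widening truncation `T_i`. -/
def trunc : ℕ → SymExpr P U B F → SymExpr P U B F
  | _, .bot => .bot
  | _, .top => .top
  | _, .prim p => .prim p
  | 0, .unop _ _ => .top
  | 0, .binop _ _ _ => .top
  | 0, .fn _ _ => .top
  | 0, .phi _ => .top
  | i + 1, .unop u l => .unop u (trunc i l)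
  | i + 1, .binop b l₁ l₂ => .binop b (trunc i l₁) (trunc i l₂)
  | i + 1, .fn f ls => .fn f (ls.map (fun l => trunc i l))
  | i + 1, .phi ls => .phi (ls.map (fun l => trunc i l))

end SymExpr


namespace SymExpr
variable {P U B F : Type*}

lemma meet_bot_left (l : SymExpr P U B F) : (bot : SymExpr P U B F).meet l = .bot := by
  cases l <;> simp [meet]
lemma meet_bot_right (l : SymExpr P U B F) : l.meet .bot = .bot := by
  cases l <;> simp [meet]
lemma meet_top_left (l : SymExpr P U B F) : (top : SymExpr P U B F).meet l = l := by
  cases l <;> simp [meet]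
lemma meet_top_right (l : SymExpr P U B F) : l.meet .top = l := by
  cases l <;> simp [meet]

lemma meetList_length (ls : List (SymExpr P U B F)) : ∀ ls',
    (meetList ls ls').length = min ls.length ls'.length := by
  induction ls with
  | nil => intro ls'; simp [meetList]
  | cons h t ih => intro ls'; cases ls' <;> simp [meetList, ih] <;> omega

lemma meet_idem (l : SymExpr P U B F) : l.meet l = l := by
  refine SymExpr.rec (motive_1 := fun l => l.meet l = l)
    (motive_2 := fun ls => meetList ls ls = ls) ?_ ?_ ?_ ?_ ?_ ?_ ?_ ?_ ?_ l <;>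
  intros <;> simp_all [meet, meetList]

lemma meet_comm (l₁ l₂ : SymExpr P U B F) : l₁.meet l₂ = l₂.meet l₁ := by
  refine SymExpr.rec (motive_1 := fun a => ∀ b, a.meet b = b.meet a)
    (motive_2 := fun ls => ∀ ls', meetList ls ls' = meetList ls' ls) ?_ ?_ ?_ ?_ ?_ ?_ ?_ ?_ ?_ l₁ l₂
  all_goals intros; rename_i x
  all_goals cases x <;> simp_all [meet, meetList] <;> split_ifs <;> simp_all <;> tauto


set_option maxHeartbeats 1000000 in
lemma meet_assoc (l₁ l₂ l₃ : SymExpr P U B F) :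
    (l₁.meet l₂).meet l₃ = l₁.meet (l₂.meet l₃) := by
  refine SymExpr.rec (motive_1 := fun a => ∀ b c, (a.meet b).meet c = a.meet (b.meet c))
    (motive_2 := fun ls => ∀ ls' ls'',
      meetList (meetList ls ls') ls'' = meetList ls (meetList ls' ls'')) ?_ ?_ ?_ ?_ ?_ ?_ ?_ ?_ ?_ l₁ l₂ l₃
  all_goals intros; rename_i x y
  all_goals cases x <;> cases y <;>
    (try simp only [meet, meetList, meet_bot_left, meet_bot_right, meet_top_left,
      meet_top_right]) <;>
    (try split_ifs) <;>
    (try simp only [meet, meetList, meet_bot_left, meet_bot_right, meet_top_left,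
      meet_top_right]) <;>
    (try split_ifs) <;>
    simp_all [meetList_length] <;> omega

end SymExpr

/-- the meet is idempotent, commutative and associative. -/
theorem SymExpr.meet_idem_comm_assoc {P U B F : Type*} :
    (∀ l : SymExpr P U B F, l.meet l = l) ∧
    (∀ l₁ l₂ : SymExpr P U B F, l₁.meet l₂ = l₂.meet l₁) ∧
    (∀ l₁ l₂ l₃ : SymExpr P U B F, (l₁.meet l₂).meet l₃ = l₁.meet (l₂.meet l₃)) := by
  exact ⟨meet_idem, meet_comm, meet_assoc⟩
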